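/- Let D ∈ ℝ^{N×M}, Γ, Γ̂ ∈ ℝ^M, Y ∈ ℝ^N with ‖Y - DΓ‖₂ ≤ ε, ‖Y - DΓ̂‖₂ ≤ ε, and (1-δ)·‖Γ̂-Γ‖₂² ≤ ‖D(Γ̂-Γ)‖₂² for 0 ≤ δ < 1. Let (w_v, ω_v), v = 1,...,L, be linear classifiers, u the correct class with min_{v≠u} [(w_u^TΓ+ω_u) - (w_v^TΓ+ω_v)] ≥ O > 0, and let φ = max_{v≠u} ‖w_u - w_v‖₂. If δ < 1 - (2φε/O)², then for all v ≠ u: w_u^TΓ̂ + ω_u > w_v^TΓ̂ + ω_v. -/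

import Mathlib

open Finset

noncomputable def dot {n : ℕ} (w v : Fin n → ℝ) : ℝ := ∑ i, w i * v i

noncomputable def l2 {n : ℕ} (v : Fin n → ℝ) : ℝ := Real.sqrt (∑ i, (v i) ^ 2)

noncomputable def linf {n : ℕ} (v : Fin n → ℝ) : ℝ := ⨆ i, |v i|

noncomputable def l0 {n : ℕ} (v : Fin n → ℝ) : ℕ := (Finset.univ.filter (fun i => v i ≠ 0)).card

noncomputable def supp {n : ℕ} (v : Fin n → ℝ) : Finset (Fin n) := Finset.univ.filter (fun i => v i ≠ 0)

noncomputable def col {N M : ℕ} (D : Matrix (Fin N) (Fin M) ℝ) (j : Fin M) : Fin N → ℝ :=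
  fun i => D i j

lemma l2_eq_norm {n : ℕ} (v : Fin n → ℝ) :
    l2 v = ‖(WithLp.equiv 2 (Fin n → ℝ)).symm v‖ := by
  rw [EuclideanSpace.norm_eq]
  simp [l2, sq_abs]

lemma l2_nonneg {n : ℕ} (v : Fin n → ℝ) : 0 ≤ l2 v := Real.sqrt_nonneg _

lemma l2_sub_le {n : ℕ} (a b : Fin n → ℝ) : l2 (a - b) ≤ l2 a + l2 b := by
  rw [l2_eq_norm, l2_eq_norm, l2_eq_norm]
  exact norm_sub_le _ _

lemma abs_dot_le {n : ℕ} (a b : Fin n → ℝ) : |dot a b| ≤ l2 a * l2 b := by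
  rw [l2_eq_norm, l2_eq_norm]
  have h := abs_real_inner_le_norm ((WithLp.equiv 2 (Fin n → ℝ)).symm a)
    ((WithLp.equiv 2 (Fin n → ℝ)).symm b)
  simpa [dot, PiLp.inner_apply, RCLike.inner_apply, conj_trivial, mul_comm] using h

lemma dot_sub_left {n : ℕ} (a b c : Fin n → ℝ) :
    dot (a - b) c = dot a c - dot b c := by
  simp [dot, sub_mul, Finset.sum_sub_distrib]

lemma dot_add_right {n : ℕ} (a b c : Fin n → ℝ) :
    dot a (b + c) = dot a b + dot a c := by
  simp [dot, mul_add, Finset.sum_add_distrib]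

theorem stmt6 {N M L : ℕ} (D : Matrix (Fin N) (Fin M) ℝ) (Γ Γhat : Fin M → ℝ)
    (Y : Fin N → ℝ) (ε δ : ℝ)
    (w : Fin L → Fin M → ℝ) (ωs : Fin L → ℝ) (u : Fin L) (O φ : ℝ)
    (hY1 : l2 (Y - D.mulVec Γ) ≤ ε) (hY2 : l2 (Y - D.mulVec Γhat) ≤ ε)
    (hδ0 : 0 ≤ δ) (hδ1 : δ < 1)
    (hrip : (1 - δ) * (l2 (Γhat - Γ)) ^ 2 ≤ (l2 (D.mulVec (Γhat - Γ))) ^ 2)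
    (hO : 0 < O)
    (hmargin : ∀ v : Fin L, v ≠ u → (dot (w u) Γ + ωs u) - (dot (w v) Γ + ωs v) ≥ O)
    (hφ : ∀ v : Fin L, v ≠ u → l2 (w u - w v) ≤ φ)
    (hδ : δ < 1 - (2 * φ * ε / O) ^ 2) :
    ∀ v : Fin L, v ≠ u → dot (w u) Γhat + ωs u > dot (w v) Γhat + ωs v := by
  intro v hv
  have hε : 0 ≤ ε := le_trans (l2_nonneg _) hY1
  have hφ0 : 0 ≤ φ := le_trans (l2_nonneg _) (hφ v hv)
  -- bound on l2 (D (Γhat - Γ))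
  have hDd : l2 (D.mulVec (Γhat - Γ)) ≤ 2 * ε := by
    have heq : D.mulVec (Γhat - Γ) = (Y - D.mulVec Γ) - (Y - D.mulVec Γhat) := by
      rw [Matrix.mulVec_sub]; abel
    rw [heq]
    calc l2 ((Y - D.mulVec Γ) - (Y - D.mulVec Γhat))
        ≤ l2 (Y - D.mulVec Γ) + l2 (Y - D.mulVec Γhat) := l2_sub_le _ _
      _ ≤ 2 * ε := by linarith
  set d := l2 (Γhat - Γ) with hd
  have hd0 : 0 ≤ d := l2_nonneg _
  have hripd : (1 - δ) * d ^ 2 ≤ (2 * ε) ^ 2 := by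
    refine le_trans hrip ?_
    have := l2_nonneg (D.mulVec (Γhat - Γ))
    nlinarith [hDd]
  set s := Real.sqrt (1 - δ) with hs
  have hs0 : 0 < s := Real.sqrt_pos.mpr (by linarith)
  have hssq : s ^ 2 = 1 - δ := Real.sq_sqrt (by linarith)
  have hsd : s * d ≤ 2 * ε := by
    nlinarith [sq_nonneg (s * d - 2 * ε), sq_nonneg (s * d + 2 * ε)]
  have hlt : 2 * φ * ε / O < s := by
    have h1 : (2 * φ * ε / O) ^ 2 < s ^ 2 := by rw [hssq]; linarith
    have h2 : 0 ≤ 2 * φ * ε / O := by positivity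
    nlinarith
  have hφεO : 2 * φ * ε < s * O := by
    have := (div_lt_iff₀ hO).mp hlt
    linarith
  have hkey : φ * d < O := by nlinarith
  -- Cauchy-Schwarz bound
  have hcs : |dot (w u - w v) (Γhat - Γ)| ≤ φ * d :=
    le_trans (abs_dot_le _ _) (by nlinarith [hφ v hv, abs_dot_le (w u - w v) (Γhat - Γ)])
  have hcs' : dot (w u - w v) (Γhat - Γ) ≥ -(φ * d) := by
    have := neg_abs_le (dot (w u - w v) (Γhat - Γ)); linarith [abs_le.mp hcs]
  have hsplit : dot (w u) Γhat - dot (w v) Γhat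
      = (dot (w u) Γ - dot (w v) Γ) + dot (w u - w v) (Γhat - Γ) := by
    have h1 : Γhat = Γ + (Γhat - Γ) := by abel
    rw [← dot_sub_left, ← dot_sub_left, h1, dot_add_right]
    ring_nf
  have hm := hmargin v hv
  have : dot (w u) Γhat - dot (w v) Γhat ≥ O - φ * d + (ωs v - ωs u) := by
    rw [hsplit]; linarith
  linarith
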